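/- If I ∼ I' then Scan T k I ∼ Scan' U(T) k I', where Scan advances the dot over a terminal using a selected parameterized token (t, α, β, c) ∈ T with α matching the current parameter, appending β and requiring the next partial function to be defined on the extended parameter sequence; Scan' is the standard Earley scan on the induced local lexing with token set U(T). -/

import Mathlib

/-- Hull membership: `ρ` has length `2*u` and for each `i < u`, the partial function
`f i` (modeling `f_{i+1} : Φ^(2i+1) ⇀ Φ`) is defined at the first `2i+1` entries of `ρ`
with value `ρ_{2i+1}`. -/
def InHull {Φ : Type} (f : ℕ → List Φ → Option Φ) (u : ℕ) (ρ : List Φ) : Prop :=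
  ρ.length = 2 * u ∧ ∀ i < u, ρ[2 * i + 1]? = f i (ρ.take (2 * i + 1))

/-- A parameterized rule `N_{f_{k+1}} → X₁^{f₁} … X_k^{f_k}`; symbols are nonterminals
(`Sum.inl`) or terminals (`Sum.inr`), and `f i` models the partial function `f_{i+1}`. -/
structure ParamRule (NT TM Φ : Type) where
  lhs : NT
  rhs : List (NT ⊕ TM)
  f : ℕ → List Φ → Option Φ

/-- A rule of the induced (ordinary) grammar: `lhs^inP_outP → rhs [⊥]`, where the
trailing failure symbol `⊥` is recorded by the flag `fail`, and `isTop` marks the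
special rules `⊤ → S^{φstart}_β` of the induced grammar. -/
structure IndRule (NT TM Φ : Type) where
  isTop : Bool
  lhs : NT
  inP : Φ
  outP : Φ
  rhs : List ((NT ⊕ TM) × Φ × Φ)
  fail : Bool

/-- `q` is one of the rules induced by the parameterized rule `r`. -/
def InducedBy {NT TM Φ : Type} (r : ParamRule NT TM Φ) (q : IndRule NT TM Φ) : Prop :=
  q.isTop = false ∧ q.lhs = r.lhs ∧
  ((q.fail = false ∧ q.rhs.length = r.rhs.length ∧
      ∃ ρ : List Φ, InHull r.f (r.rhs.length + 1) ρ ∧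
        ρ[0]? = some q.inP ∧ ρ[2 * r.rhs.length + 1]? = some q.outP ∧
        ∀ i < r.rhs.length, ∃ X a b,
          r.rhs[i]? = some X ∧ ρ[2 * i + 1]? = some a ∧
          ρ[2 * i + 2]? = some b ∧ q.rhs[i]? = some (X, a, b)) ∨
   (q.fail = true ∧ ∃ h, 1 ≤ h ∧ h ≤ r.rhs.length ∧ q.rhs.length = h ∧
      ∃ ρ : List Φ, InHull r.f h ρ ∧ ρ[0]? = some q.inP ∧
        (∀ i, i + 1 < h → ∃ X a b,
          r.rhs[i]? = some X ∧ ρ[2 * i + 1]? = some a ∧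
          ρ[2 * i + 2]? = some b ∧ q.rhs[i]? = some (X, a, b)) ∧
        ∃ X a βh, r.rhs[h - 1]? = some X ∧ ρ[2 * h - 1]? = some a ∧
          q.rhs[h - 1]? = some (X, a, βh) ∧ r.f h (ρ ++ [βh]) = none))

/-- A parameterized (PELLA) item `(r, d, i, j, ρ)`. -/
structure PItem (NT TM Φ : Type) where
  r : ParamRule NT TM Φ
  d : ℕ
  i : ℕ
  j : ℕ
  ρ : List Φ

/-- An ordinary (ELLA) Earley item `(q, d, i, j)` of the induced grammar. -/
structure EItem (NT TM Φ : Type) where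
  rule : IndRule NT TM Φ
  d : ℕ
  i : ℕ
  j : ℕ

/-- The invariant demanded of parameterized items: `d ≤ k` and `ρ ∈ ⟨f₁,…,f_{d+1}⟩`. -/
def PItem.Valid {NT TM Φ : Type} (x : PItem NT TM Φ) : Prop :=
  x.d ≤ x.r.rhs.length ∧ InHull x.r.f (x.d + 1) x.ρ

/-- `ρ` is the length-`2*(d+1)` prefix of the parameter sequence of the induced rule `q`. -/
def ParamsMatch {NT TM Φ : Type} (q : IndRule NT TM Φ) (d : ℕ) (ρ : List Φ) : Prop :=
  ρ.length = 2 * (d + 1) ∧ ρ[0]? = some q.inP ∧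
  (∀ i < d, ∃ X a b, q.rhs[i]? = some (X, a, b) ∧
      ρ[2 * i + 1]? = some a ∧ ρ[2 * i + 2]? = some b) ∧
  ((∃ X a b, q.rhs[d]? = some (X, a, b) ∧ ρ[2 * d + 1]? = some a) ∨
   (d = q.rhs.length ∧ q.fail = false ∧ ρ[2 * d + 1]? = some q.outP))

/-- The ordinary item `y` belongs to the induced item set `⟦x⟧` of the parameterized
item `x`. -/
def MemInduced {NT TM Φ : Type} (x : PItem NT TM Φ) (y : EItem NT TM Φ) : Prop :=
  InducedBy x.r y.rule ∧ y.d = x.d ∧ y.i = x.i ∧ y.j = x.j ∧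
  (y.rule.fail = true → x.d + 1 ≤ y.rule.rhs.length) ∧
  ParamsMatch y.rule x.d x.ρ

/-- `⟦I⟧`, the induced item set of a set of parameterized items. -/
def InducedSet {NT TM Φ : Type} (I : Set (PItem NT TM Φ)) : Set (EItem NT TM Φ) :=
  { y | ∃ x ∈ I, MemInduced x y }

/-- `NormItems` removes items whose left-hand side is `⊤` or whose dot is immediately
before `⊥`. -/
def NormItems {NT TM Φ : Type} (I' : Set (EItem NT TM Φ)) : Set (EItem NT TM Φ) :=
  { y ∈ I' | y.rule.isTop = false ∧ ¬(y.rule.fail = true ∧ y.d = y.rule.rhs.length) }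

/-- The correspondence `I ∼ I'`, namely `⟦I⟧ = Norm(I')`. -/
def Sim {NT TM Φ : Type} (I : Set (PItem NT TM Φ)) (I' : Set (EItem NT TM Φ)) : Prop :=
  InducedSet I = NormItems I'

/-- The re-association bijection `U(t, α, β, c) = ((t, α, β), c)`. -/
def reassoc {TM Φ Ch : Type} (p : TM × Φ × Φ × List Ch) : (TM × Φ × Φ) × List Ch :=
  ((p.1, p.2.1, p.2.2.1), p.2.2.2)

/-- PELLA scanning at position `k` with selected parameterized token set `T`. -/
def Scan {NT TM Φ Ch : Type} (T : Set (TM × Φ × Φ × List Ch)) (k : ℕ)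
    (I : Set (PItem NT TM Φ)) : Set (PItem NT TM Φ) :=
  I ∪ { z | ∃ x ∈ I, x.j = k ∧ ∃ t : TM, x.r.rhs[x.d]? = some (Sum.inr t) ∧
      ∃ (α β : Φ) (c : List Ch), (t, α, β, c) ∈ T ∧
        x.ρ[2 * x.d + 1]? = some α ∧
        ∃ b : Φ, x.r.f (x.d + 1) (x.ρ ++ [β]) = some b ∧
          z = ⟨x.r, x.d + 1, x.i, k + c.length, (x.ρ ++ [β]) ++ [b]⟩ }

/-- Standard Earley scanning at position `k` on the induced local lexing with
token set `T'`. -/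
def Scan' {NT TM Φ Ch : Type} (T' : Set ((TM × Φ × Φ) × List Ch)) (k : ℕ)
    (I' : Set (EItem NT TM Φ)) : Set (EItem NT TM Φ) :=
  I' ∪ { z | ∃ y ∈ I', y.j = k ∧ ∃ (t : TM) (α β : Φ) (c : List Ch),
      y.rule.rhs[y.d]? = some (Sum.inr t, α, β) ∧ ((t, α, β), c) ∈ T' ∧
      z = ⟨y.rule, y.d + 1, y.i, k + c.length⟩ }


section Helpers

variable {Φ : Type}

lemma get?_lt {α : Type} {l : List α} {n : ℕ} {a : α} (h : l[n]? = some a) :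
    n < l.length := by
  exact (List.getElem?_eq_some_iff.mp h).1

lemma app2_get?_lt {α : Type} (l : List α) (a b : α) {n : ℕ} (h : n < l.length) :
    (l ++ [a] ++ [b])[n]? = l[n]? := by
  rw [List.getElem?_append_left (by simp; omega), List.getElem?_append_left h]

lemma app2_get?_mid {α : Type} (l : List α) (a b : α) :
    (l ++ [a] ++ [b])[l.length]? = some a := by
  rw [List.getElem?_append_left (by simp), List.getElem?_concat_length]

lemma app2_get?_last {α : Type} (l : List α) (a b : α) :
    (l ++ [a] ++ [b])[l.length + 1]? = some b := by
  have h : l.length + 1 = (l ++ [a]).length := by simp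
  rw [h, List.getElem?_concat_length]

lemma hull_take {f : ℕ → List Φ → Option Φ} {u v : ℕ} {ρ : List Φ}
    (h : InHull f u ρ) (hv : v ≤ u) : InHull f v (ρ.take (2 * v)) := by
  obtain ⟨hl, hg⟩ := h
  constructor
  · rw [List.length_take, hl]; omega
  · intro i hi
    rw [List.getElem?_take_of_lt (by omega), List.take_take, min_eq_left (by omega)]
    exact hg i (by omega)

lemma hull_unique {f : ℕ → List Φ → Option Φ} {u : ℕ} {ρ σ : List Φ}
    (hρ : InHull f u ρ) (hσ : InHull f u σ)
    (he : ∀ i < u, ρ[2 * i]? = σ[2 * i]?) : ρ = σ := by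
  have key : ∀ m, m ≤ 2 * u → ρ.take m = σ.take m := by
    intro m
    induction m with
    | zero => simp
    | succ n ih =>
      intro hn
      have hih := ih (by omega)
      rw [List.take_succ, List.take_succ, hih]
      have hget : ρ[n]? = σ[n]? := by
        rcases Nat.even_or_odd n with ⟨i, hi⟩ | ⟨i, hi⟩
        · have hn2 : n = 2 * i := by omega
          subst hn2
          exact he i (by omega)
        · have hn2 : n = 2 * i + 1 := by omega
          subst hn2
          rw [hρ.2 i (by omega), hσ.2 i (by omega), hih]
      rw [hget]
  have h2 := key (2 * u) le_rfl
  rwa [List.take_of_length_le (by rw [hρ.1]), List.take_of_length_le (by rw [hσ.1])] at h2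

lemma hull_get?_isSome {f : ℕ → List Φ → Option Φ} {u : ℕ} {ρ : List Φ}
    (h : InHull f u ρ) {n : ℕ} (hn : n < 2 * u) : ∃ a, ρ[n]? = some a := by
  have hl : n < ρ.length := by rw [h.1]; exact hn
  rw [List.getElem?_eq_getElem hl]
  exact ⟨_, rfl⟩

end Helpers


lemma backward_core {NT TM Φ : Type} {q : IndRule NT TM Φ} {f : ℕ → List Φ → Option Φ}
    {d u : ℕ} {ρ ρf : List Φ} {β : Φ}
    (hρ : InHull f (d + 1) ρ) (hρf : InHull f u ρf) (hud : d + 2 ≤ u)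
    (hpm : ParamsMatch q d ρ)
    (h0 : ρf[0]? = some q.inP)
    (hall : ∀ i < d, ∃ X a b, q.rhs[i]? = some (X, a, b) ∧ ρf[2 * i + 2]? = some b)
    (hβ : ρf[2 * d + 2]? = some β) :
    ∃ b₂, f (d + 1) (ρ ++ [β]) = some b₂ ∧ ρf[2 * d + 3]? = some b₂ := by
  have hlen : ρ.length = 2 * (d + 1) := hρ.1
  have heq : ρ = ρf.take (2 * (d + 1)) := by
    apply hull_unique hρ (hull_take hρf (by omega))
    intro i hi
    rw [List.getElem?_take_of_lt (by omega)]
    match i, hi with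
    | 0, _ => rw [hpm.2.1, h0]
    | (j+1), hj =>
      obtain ⟨X, a, b, hq, _, hb⟩ := hpm.2.2.1 j (by omega)
      obtain ⟨X', a', b', hq', hb'⟩ := hall j (by omega)
      rw [hq] at hq'
      simp only [Option.some.injEq, Prod.mk.injEq] at hq'
      obtain ⟨hX, hA, hB⟩ := hq'
      subst hB
      have e : 2 * (j + 1) = 2 * j + 2 := by ring
      rw [e, hb, hb']
  have hβ' : ρf[2 * (d + 1)]? = some β := by
    rwa [show 2 * (d + 1) = 2 * d + 2 from by ring]
  have htk : ρf.take (2 * (d + 1) + 1) = ρ ++ [β] := by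
    rw [List.take_succ, ← heq, hβ']
    rfl
  obtain ⟨b₂, hb₂⟩ := hull_get?_isSome hρf (show 2 * (d + 1) + 1 < 2 * u by omega)
  refine ⟨b₂, ?_, by rwa [show (2 * d + 3) = 2 * (d + 1) + 1 from by ring]⟩
  have hh := hρf.2 (d + 1) (by omega)
  rw [htk, hb₂] at hh
  exact hh.symm

/-- If `I ∼ I'` then `Scan T k I ∼ Scan' U(T) k I'`. -/
theorem scan_simulation {NT TM Φ Ch : Type}
    (T : Set (TM × Φ × Φ × List Ch)) (k : ℕ)
    (I : Set (PItem NT TM Φ)) (I' : Set (EItem NT TM Φ))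
    (hI : ∀ x ∈ I, x.Valid) (hsim : Sim I I') :
    Sim (Scan T k I) (Scan' (reassoc '' T) k I') := by
  show InducedSet (Scan T k I) = NormItems (Scan' (reassoc '' T) k I')
  ext y
  obtain ⟨yr, yd, yi, yj⟩ := y
  simp only [InducedSet, NormItems, Scan, Scan', Set.mem_union, Set.mem_setOf_eq]
  constructor
  · rintro ⟨x, hx | hx, hmem⟩
    · have hy : (⟨yr, yd, yi, yj⟩ : EItem NT TM Φ) ∈ NormItems I' := by
        rw [← hsim]; exact ⟨x, hx, hmem⟩
      obtain ⟨hyI', htop, hnf⟩ := hy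
      exact ⟨Or.inl hyI', htop, hnf⟩
    · obtain ⟨x₀, hx₀, hjk, t, hrt, α, β, c, hT, hα, b, hfb, hz⟩ := hx
      subst hz
      obtain ⟨hInd, hd, hi, hj, hfail, hpm⟩ := hmem
      dsimp only at hd hi hj hfail hpm hInd
      subst hd; subst hi; subst hj
      have hlen : x₀.ρ.length = 2 * (x₀.d + 1) := (hI x₀ hx₀).2.1
      -- identify the rhs entry at the dot
      obtain ⟨X, a, b', hq, ha, hb'⟩ := hpm.2.2.1 x₀.d (by omega)
      rw [app2_get?_lt _ _ _ (by omega), hα] at ha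
      rw [show 2 * x₀.d + 2 = x₀.ρ.length from by omega, app2_get?_mid] at hb'
      obtain rfl : α = a := Option.some.inj ha
      obtain rfl : β = b' := Option.some.inj hb'
      have hXt : X = Sum.inr t := by
        rcases hInd.2.2 with ⟨hf, hlq, ρf, hhull, h0, hout, hall⟩ |
          ⟨hf, h, h1h, hhle, hlq, ρf, hhull, h0, hall, X₂, a₂, βh, hrlast, hρlast, hqlast, hnone⟩
        · have hdm : x₀.d < x₀.r.rhs.length := get?_lt hrt
          obtain ⟨X1, a1, b1, hr1, ha1, hb1, hq1⟩ := hall x₀.d hdm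
          rw [hrt] at hr1
          rw [hq] at hq1
          simp only [Option.some.injEq, Prod.mk.injEq] at hq1 hr1
          rw [hq1.1, ← hr1]
        · have hdh : x₀.d + 1 < h := by
            have := hfail (by rw [hf]); omega
          obtain ⟨X1, a1, b1, hr1, ha1, hb1, hq1⟩ := hall x₀.d (by omega)
          rw [hrt] at hr1
          rw [hq] at hq1
          simp only [Option.some.injEq, Prod.mk.injEq] at hq1 hr1
          rw [hq1.1, ← hr1]
      subst hXt
      -- the pre-scan ordinary item
      have hy'm : MemInduced x₀ ⟨yr, x₀.d, x₀.i, x₀.j⟩ := by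
        refine ⟨hInd, rfl, rfl, rfl, fun hff => by
          have h2 := hfail hff; dsimp only; omega, ?_⟩
        refine ⟨hlen, ?_, ?_, Or.inl ⟨Sum.inr t, α, β, hq, hα⟩⟩
        · have h0' := hpm.2.1
          rwa [app2_get?_lt _ _ _ (by omega)] at h0'
        · intro i hi
          obtain ⟨Xi, ai, bi, hqi, hai, hbi⟩ := hpm.2.2.1 i (by omega)
          rw [app2_get?_lt _ _ _ (by omega)] at hai
          rw [app2_get?_lt _ _ _ (by omega)] at hbi
          exact ⟨Xi, ai, bi, hqi, hai, hbi⟩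
      have hy'I' : (⟨yr, x₀.d, x₀.i, x₀.j⟩ : EItem NT TM Φ) ∈ I' := by
        have hN : (⟨yr, x₀.d, x₀.i, x₀.j⟩ : EItem NT TM Φ) ∈ NormItems I' := by
          rw [← hsim]; exact ⟨x₀, hx₀, hy'm⟩
        exact hN.1
      refine ⟨Or.inr ⟨⟨yr, x₀.d, x₀.i, x₀.j⟩, hy'I', hjk, t, α, β, c, hq,
        ⟨(t, α, β, c), hT, rfl⟩, rfl⟩, hInd.1, ?_⟩
      rintro ⟨hff, hde⟩
      have h5 := hfail hff
      omega
  · rintro ⟨hy | hy, htop, hnf⟩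
    · have hmem : (⟨yr, yd, yi, yj⟩ : EItem NT TM Φ) ∈ NormItems I' := ⟨hy, htop, hnf⟩
      rw [← hsim] at hmem
      obtain ⟨x, hx, hm⟩ := hmem
      exact ⟨x, Or.inl hx, hm⟩
    · obtain ⟨y', hy'I', hjk, t, α, β, c, hrhs, hTok, hyeq⟩ := hy
      injection hyeq with h1 h2 h3 h4
      subst h1; subst h2; subst h3; subst h4
      obtain ⟨p, hpT, hpe⟩ := hTok
      obtain ⟨t', α', β', c'⟩ := p
      simp only [reassoc, Prod.mk.injEq] at hpe
      obtain ⟨⟨rfl, rfl, rfl⟩, rfl⟩ := hpe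
      rename' t' => t, α' => α, β' => β, c' => c
      have hy'N : y' ∈ NormItems I' := by
        refine ⟨hy'I', htop, ?_⟩
        rintro ⟨hff, hde⟩
        have := get?_lt hrhs
        omega
      rw [← hsim] at hy'N
      obtain ⟨x₀, hx₀, hInd, hd, hi, hj2, hfb, hpm⟩ := hy'N
      rw [hd] at hrhs
      have hval := hI x₀ hx₀
      have hlen : x₀.ρ.length = 2 * (x₀.d + 1) := hval.2.1
      have hdlt : x₀.d < y'.rule.rhs.length := get?_lt hrhs
      have hdot : x₀.ρ[2 * x₀.d + 1]? = some α := by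
        rcases hpm.2.2.2 with ⟨X, a, b', hq, ha⟩ | ⟨hdeq, _, _⟩
        · rw [hrhs] at hq
          simp only [Option.some.injEq, Prod.mk.injEq] at hq
          obtain ⟨hX, hA, hB⟩ := hq
          subst hA
          exact ha
        · omega
      rcases hInd.2.2 with ⟨hf, hlq, ρf, hhull, h0, hout, hall⟩ |
        ⟨hf, h, h1h, hhle, hlq, ρf, hhull, h0, hall, X₂, a₂, βh, hrlast, hρlast, hqlast, hnone⟩
      · -- non-failure induced rule
        have hdm : x₀.d < x₀.r.rhs.length := by omega
        have hallq : ∀ i < x₀.d, ∃ X a b, y'.rule.rhs[i]? = some (X, a, b) ∧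
            ρf[2 * i + 2]? = some b := by
          intro i hi
          obtain ⟨Xi, ai, bi, _, _, hbi, hqi⟩ := hall i (by omega)
          exact ⟨Xi, ai, bi, hqi, hbi⟩
        obtain ⟨X1, a1, b1, hr1, ha1, hb1, hq1⟩ := hall x₀.d hdm
        rw [hrhs] at hq1
        simp only [Option.some.injEq, Prod.mk.injEq] at hq1
        obtain ⟨hX1, hA1, hB1⟩ := hq1
        have hβf : ρf[2 * x₀.d + 2]? = some β := by rw [hB1]; exact hb1
        obtain ⟨b₂, hb₂, hρfb⟩ := backward_core hval.2 hhull (by omega) hpm h0 hallq hβf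
        have hrt : x₀.r.rhs[x₀.d]? = some (Sum.inr t) := by rw [← hX1] at hr1; exact hr1
        refine ⟨⟨x₀.r, x₀.d + 1, x₀.i, k + c.length, x₀.ρ ++ [β] ++ [b₂]⟩,
          Or.inr ⟨x₀, hx₀, by rw [← hj2]; exact hjk, t, hrt, α, β, c, hpT, hdot, b₂, hb₂, rfl⟩, ?_⟩
        refine ⟨hInd, ?_, hi, rfl, ?_, ?_⟩
        · show y'.d + 1 = x₀.d + 1
          rw [hd]
        · intro hff
          have hff' : y'.rule.fail = true := hff
          rw [hf] at hff'
          exact absurd hff' (by simp)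
        show ParamsMatch y'.rule (x₀.d + 1) (x₀.ρ ++ [β] ++ [b₂])
        refine ⟨by simp only [List.length_append, List.length_singleton, hlen]; omega, ?_, ?_, ?_⟩
        · rw [app2_get?_lt _ _ _ (by omega)]; exact hpm.2.1
        · intro i hi
          rcases Nat.lt_or_ge i x₀.d with hlt | hge
          · obtain ⟨Xi, ai, bi, hqi, hai, hbi⟩ := hpm.2.2.1 i hlt
            exact ⟨Xi, ai, bi, hqi, by rw [app2_get?_lt _ _ _ (by omega)]; exact hai,
              by rw [app2_get?_lt _ _ _ (by omega)]; exact hbi⟩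
          · have hie : i = x₀.d := by omega
            subst hie
            exact ⟨Sum.inr t, α, β, hrhs, by rw [app2_get?_lt _ _ _ (by omega)]; exact hdot,
              by rw [show 2 * x₀.d + 2 = x₀.ρ.length from by omega, app2_get?_mid]⟩
        · by_cases hcm : x₀.d + 1 < x₀.r.rhs.length
          · left
            obtain ⟨X1', a1', b1', hr1', ha1', hb1', hq1'⟩ := hall (x₀.d + 1) hcm
            have hab : a1' = b₂ := by
              rw [show 2 * (x₀.d + 1) + 1 = 2 * x₀.d + 3 from by ring] at ha1'
              rw [ha1'] at hρfb
              exact Option.some.inj hρfb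
            exact ⟨X1', a1', b1', hq1', by
              rw [show 2 * (x₀.d + 1) + 1 = x₀.ρ.length + 1 from by omega, app2_get?_last, hab]⟩
          · right
            refine ⟨by omega, hf, ?_⟩
            rw [show 2 * (x₀.d + 1) + 1 = x₀.ρ.length + 1 from by omega, app2_get?_last]
            rw [show (2 : ℕ) * x₀.r.rhs.length + 1 = 2 * x₀.d + 3 from by omega] at hout
            rw [hρfb] at hout
            exact hout
      · -- failure induced rule
        have hne : y'.d + 1 ≠ y'.rule.rhs.length := fun he => hnf ⟨hf, he⟩
        have hd2h : x₀.d + 2 ≤ h := by omega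
        have hallq : ∀ i < x₀.d, ∃ X a b, y'.rule.rhs[i]? = some (X, a, b) ∧
            ρf[2 * i + 2]? = some b := by
          intro i hi
          obtain ⟨Xi, ai, bi, _, _, hbi, hqi⟩ := hall i (by omega)
          exact ⟨Xi, ai, bi, hqi, hbi⟩
        obtain ⟨X1, a1, b1, hr1, ha1, hb1, hq1⟩ := hall x₀.d (by omega)
        rw [hrhs] at hq1
        simp only [Option.some.injEq, Prod.mk.injEq] at hq1
        obtain ⟨hX1, hA1, hB1⟩ := hq1
        have hβf : ρf[2 * x₀.d + 2]? = some β := by rw [hB1]; exact hb1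
        obtain ⟨b₂, hb₂, hρfb⟩ := backward_core hval.2 hhull (by omega) hpm h0 hallq hβf
        have hrt : x₀.r.rhs[x₀.d]? = some (Sum.inr t) := by rw [← hX1] at hr1; exact hr1
        refine ⟨⟨x₀.r, x₀.d + 1, x₀.i, k + c.length, x₀.ρ ++ [β] ++ [b₂]⟩,
          Or.inr ⟨x₀, hx₀, by rw [← hj2]; exact hjk, t, hrt, α, β, c, hpT, hdot, b₂, hb₂, rfl⟩, ?_⟩
        refine ⟨hInd, ?_, hi, rfl, ?_, ?_⟩
        · show y'.d + 1 = x₀.d + 1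
          rw [hd]
        · intro hff
          show x₀.d + 1 + 1 ≤ y'.rule.rhs.length
          omega
        show ParamsMatch y'.rule (x₀.d + 1) (x₀.ρ ++ [β] ++ [b₂])
        refine ⟨by simp only [List.length_append, List.length_singleton, hlen]; omega, ?_, ?_, ?_⟩
        · rw [app2_get?_lt _ _ _ (by omega)]; exact hpm.2.1
        · intro i hi
          rcases Nat.lt_or_ge i x₀.d with hlt | hge
          · obtain ⟨Xi, ai, bi, hqi, hai, hbi⟩ := hpm.2.2.1 i hlt
            exact ⟨Xi, ai, bi, hqi, by rw [app2_get?_lt _ _ _ (by omega)]; exact hai,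
              by rw [app2_get?_lt _ _ _ (by omega)]; exact hbi⟩
          · have hie : i = x₀.d := by omega
            subst hie
            exact ⟨Sum.inr t, α, β, hrhs, by rw [app2_get?_lt _ _ _ (by omega)]; exact hdot,
              by rw [show 2 * x₀.d + 2 = x₀.ρ.length from by omega, app2_get?_mid]⟩
        · left
          by_cases hch : x₀.d + 2 < h
          · obtain ⟨X1', a1', b1', hr1', ha1', hb1', hq1'⟩ := hall (x₀.d + 1) (by omega)
            have hab : a1' = b₂ := by
              rw [show 2 * (x₀.d + 1) + 1 = 2 * x₀.d + 3 from by ring] at ha1'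
              rw [ha1'] at hρfb
              exact Option.some.inj hρfb
            exact ⟨X1', a1', b1', hq1', by
              rw [show 2 * (x₀.d + 1) + 1 = x₀.ρ.length + 1 from by omega, app2_get?_last, hab]⟩
          · have hh1 : h - 1 = x₀.d + 1 := by omega
            rw [hh1] at hqlast
            have hρl : ρf[2 * x₀.d + 3]? = some a₂ := by
              rw [show 2 * x₀.d + 3 = 2 * h - 1 from by omega]; exact hρlast
            have hab : a₂ = b₂ := by
              rw [hρl] at hρfb
              exact Option.some.inj hρfb
            exact ⟨X₂, a₂, βh, hqlast, by
              rw [show 2 * (x₀.d + 1) + 1 = x₀.ρ.length + 1 from by omega, app2_get?_last, hab]⟩
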